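/- For every infinite cardinal λ there exists a function F from the countably infinite subsets of λ to λ such that there is no sequence ⟨U_n : n < ω⟩ of subsets of λ satisfying: U_{n+1} ⊆ U_n, U_{n+1} ≠ U_n, and each U_n is closed under F (i.e. F(u) ∈ U_n for every countably infinite u ⊆ U_n). In other words, there is an algebra on λ with one ω-ary operation having no strictly decreasing ω-chain of subuniverses. -/

import Mathlib

open Set

noncomputable section

namespace Stmt10

/-- sup-type of a set of ordinals -/
def sd (v : Set Ordinal) : Ordinal := ⨆ a : v, (a : Ordinal) + 1

/-- spec of a ladder converging to `δ` -/
def LadderSpec (δ : Ordinal) (L : ℕ → Ordinal) : Prop :=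
  Monotone L ∧ L 0 = 0 ∧ (∀ n, L n < δ) ∧ (⨆ n, L n) = δ

open Classical in
def ladder (δ : Ordinal) : ℕ → Ordinal :=
  if h : ∃ L, LadderSpec δ L then h.choose else fun _ => 0

lemma ladder_spec {δ : Ordinal} (h : ∃ L, LadderSpec δ L) : LadderSpec δ (ladder δ) := by
  rw [ladder, dif_pos h]
  exact h.choose_spec

/-- block index of an ordinal below `δ` -/
def blk (δ : Ordinal) (a : Ordinal) : ℕ := sInf {i | a < ladder δ (i + 1)}

lemma blk_lt {δ a : Ordinal} (h : ∃ L, LadderSpec δ L) (ha : a < δ) :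
    a < ladder δ (blk δ a + 1) := by
  obtain ⟨hmono, h0, hlt, hsup⟩ := ladder_spec h
  have hne : {i | a < ladder δ (i + 1)}.Nonempty := by
    by_contra hc
    rw [Set.not_nonempty_iff_eq_empty] at hc
    have h1 : ∀ n, ladder δ n ≤ a := by
      intro n
      rcases n with _ | m
      · rw [h0]; exact (zero_le : (0 : Ordinal) ≤ a)
      · by_contra hlt'
        have : m ∈ {i | a < ladder δ (i + 1)} := lt_of_not_ge hlt'
        simp [hc] at this
    have : δ ≤ a := by
      rw [← hsup]
      exact ciSup_le h1
    exact absurd ha (not_lt_of_ge this)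
  exact Nat.sInf_mem hne


/-- trace of a set along the blocks of the ladder of its sup-type -/
def tr (v : Set Ordinal) (i : ℕ) : Set Ordinal :=
  {a | a ∈ v ∧ a < sd v ∧ blk (sd v) a = i}

instance evS : Setoid (ℕ → Set Ordinal) where
  r t₁ t₂ := {i | t₁ i ≠ t₂ i}.Finite
  iseqv := by
    constructor
    · intro t
      convert Set.finite_empty using 2
      simp
    · intro a b h
      convert h using 1
      ext i
      simp [ne_comm]
    · intro a b c hab hbc
      refine (hab.union hbc).subset ?_
      intro i hi
      by_contra hcon
      simp only [Set.mem_union, Set.mem_setOf_eq] at hcon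
      push_neg at hcon
      exact hi (hcon.1.trans hcon.2)

/-- canonical representative of the almost-everywhere-equality class of the trace -/
def rep (v : Set Ordinal) : ℕ → Set Ordinal := (⟦tr v⟧ : Quotient evS).out

lemma rep_rel (v : Set Ordinal) : {i | rep v i ≠ tr v i}.Finite :=
  Quotient.exact (Quotient.out_eq (⟦tr v⟧ : Quotient evS))

lemma rep_congr {v w : Set Ordinal} (h : {i | tr v i ≠ tr w i}.Finite) : rep v = rep w :=
  congrArg Quotient.out (Quotient.sound h)

/-- disagreement set -/
def DD (v : Set Ordinal) : Set ℕ := {i | tr v i ≠ rep v i}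

lemma DD_finite (v : Set Ordinal) : (DD v).Finite := by
  refine (rep_rel v).subset ?_
  intro i hi
  exact fun h => hi h.symm

def mm (v : Set Ordinal) : ℕ := (DD v).ncard

def ii (v : Set Ordinal) : ℕ := sInf {i | mm v - 1 ≤ i ∧ i ∈ DD v}

/-- THE function -/
def F (v : Set Ordinal) : Ordinal := sInf ((rep v (ii v) ∩ Set.Iio (sd v)) \ v)

def Tail (y : ℕ → Ordinal) (k : ℕ) : Set Ordinal := y '' Set.Ici k

def Catch (y : ℕ → Ordinal) : Prop :=
  ∃ j k, j < k ∧ ∃ s : Set Ordinal,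
    s ⊆ Tail y k ∧ s.Countable ∧ s.Infinite ∧ F s = y j


lemma mem_tail {y : ℕ → Ordinal} {k : ℕ} {a : Ordinal} :
    a ∈ Tail y k ↔ ∃ n, k ≤ n ∧ y n = a := by
  simp [Tail]

lemma tail_countable (y : ℕ → Ordinal) (k : ℕ) : (Tail y k).Countable :=
  (Set.to_countable _).image _

lemma tail_infinite {y : ℕ → Ordinal} (hy : Function.Injective y) (k : ℕ) :
    (Tail y k).Infinite :=
  (Set.Ici_infinite k).image hy.injOn

lemma tail_mono {y : ℕ → Ordinal} {j k : ℕ} (h : j ≤ k) : Tail y k ⊆ Tail y j := by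
  intro a ha
  rw [mem_tail] at ha ⊢
  obtain ⟨n, hn, rfl⟩ := ha
  exact ⟨n, h.trans hn, rfl⟩

lemma sd_bdd {v : Set Ordinal} (hv : v.Countable) :
    BddAbove (Set.range (fun a : v => (a : Ordinal) + 1)) := by
  haveI := hv.to_subtype
  exact Ordinal.bddAbove_of_small

lemma le_sd {v : Set Ordinal} (hv : v.Countable) {a : Ordinal} (ha : a ∈ v) :
    a + 1 ≤ sd v :=
  le_ciSup (sd_bdd hv) (⟨a, ha⟩ : v)

lemma lt_sd {v : Set Ordinal} (hv : v.Countable) {a : Ordinal} (ha : a ∈ v) : a < sd v :=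
  lt_of_lt_of_le ((Order.add_one_le_iff).1 le_rfl) (le_sd hv ha)

lemma sd_le {v : Set Ordinal} {β : Ordinal} (hne : v.Nonempty) (h : ∀ a ∈ v, a + 1 ≤ β) :
    sd v ≤ β := by
  haveI : Nonempty v := hne.to_subtype
  exact ciSup_le fun a => h a a.2


lemma catch_all (y₀ : ℕ → Ordinal) (hy₀ : Function.Injective y₀) : Catch y₀ := by
  suffices h : ∀ δ (y : ℕ → Ordinal), Function.Injective y → (⨆ n, y n + 1) = δ → Catch y from
    h _ y₀ hy₀ rfl
  intro δ
  induction δ using Ordinal.induction with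
  | _ δ IH =>
  intro y hy hδ
  have hbR : BddAbove (Set.range fun n => y n + 1) := Ordinal.bddAbove_range _
  have hyle : ∀ n, y n + 1 ≤ δ := fun n => hδ ▸ le_ciSup hbR n
  have hylt : ∀ n, y n < δ := fun n =>
    lt_of_lt_of_le ((Order.add_one_le_iff).1 le_rfl) (hyle n)
  by_cases hA : ∃ φ : ℕ → ℕ, StrictMono φ ∧ (⨆ n, y (φ n) + 1) < δ
  · obtain ⟨φ, hφ, hlt⟩ := hA
    obtain ⟨j, k, hjk, s, hs1, hs2, hs3, hs4⟩ := IH _ hlt (y ∘ φ) (hy.comp hφ.injective) rfl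
    refine ⟨φ j, φ k, hφ hjk, s, hs1.trans ?_, hs2, hs3, hs4⟩
    intro a ha
    rw [mem_tail] at ha ⊢
    obtain ⟨n, hn, rfl⟩ := ha
    exact ⟨φ n, hφ.monotone hn, rfl⟩
  · push_neg at hA
    have hdiv : ∀ β, β < δ → {n | y n < β}.Finite := by
      intro β hβ
      by_contra hinf
      have hInf : {n | y n < β}.Infinite := hinf
      have hst := Nat.nth_strictMono hInf
      have hmem := fun n => Nat.nth_mem_of_infinite hInf n
      have h1 : (⨆ n, y (Nat.nth (fun n => y n < β) n) + 1) ≤ β :=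
        ciSup_le fun n => (Order.add_one_le_iff).2 (hmem n)
      exact absurd (lt_of_le_of_lt h1 hβ) (not_lt_of_ge (hA _ hst))
    set T : ℕ → Set Ordinal := fun k => Tail y k with hTdef
    have hTc : ∀ k, (T k).Countable := fun k => tail_countable y k
    have hTinf : ∀ k, (T k).Infinite := fun k => tail_infinite hy k
    have hTsub0 : ∀ k, T k ⊆ T 0 := fun k => tail_mono (Nat.zero_le k)
    have hyk1 : ∀ k, y k + 1 < δ := by
      intro k
      have hex : ∃ m, y k < y m := by
        by_contra hc
        push_neg at hc
        have hfin : {n | y n < y k}.Finite := hdiv _ (hylt k)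
        have hsub : {n | n ≠ k} ⊆ {n | y n < y k} := fun n hn =>
          lt_of_le_of_ne (hc n) (fun h => hn (hy h))
        have h2 : ({k} : Set ℕ)ᶜ ⊆ {n | y n < y k} := hsub
        exact (Set.finite_singleton k).infinite_compl (hfin.subset h2)
      obtain ⟨m, hm⟩ := hex
      calc y k + 1 ≤ y m := (Order.add_one_le_iff).2 hm
        _ < y m + 1 := (Order.add_one_le_iff).1 le_rfl
        _ ≤ δ := hyle m
    have hLex : ∃ L, LadderSpec δ L := by
      refine ⟨fun n => (Finset.range n).sup fun k => y k + 1, ?_, ?_, ?_, ?_⟩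
      · intro a b hab; exact Finset.sup_mono (Finset.range_subset_range.2 hab)
      · simp
      · intro n
        refine (Finset.sup_lt_iff ?_).2 fun b _ => hyk1 b
        rw [Ordinal.bot_eq_zero]
        exact lt_of_le_of_lt (zero_le : (0 : Ordinal) ≤ y 0) (hylt 0)
      · apply le_antisymm
        · exact ciSup_le fun n => Finset.sup_le fun b _ => (hyk1 b).le
        · rw [← hδ]
          refine ciSup_le fun n => ?_
          have h1 : y n + 1 ≤ (Finset.range (n + 1)).sup fun k => y k + 1 :=
            Finset.le_sup (f := fun k => y k + 1) (Finset.mem_range.2 (Nat.lt_succ_self n))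
          exact h1.trans (le_ciSup (Ordinal.bddAbove_range _) (n + 1))
    obtain ⟨hLmono, hL0, hLlt, hLsup⟩ := ladder_spec hLex
    have hsdT : ∀ k, sd (T k) = δ := by
      intro k
      apply le_antisymm
      · refine sd_le (hTinf k).nonempty ?_
        intro a ha
        rw [mem_tail] at ha
        obtain ⟨n, _, rfl⟩ := ha
        exact hyle n
      · by_contra hc
        push_neg at hc
        have hfin := hdiv _ hc
        have hsub : Set.Ici k ⊆ {n | y n < sd (T k)} := fun n hn =>
          lt_sd (hTc k) (mem_tail.2 ⟨n, hn, rfl⟩)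
        exact (Set.Ici_infinite k) (hfin.subset hsub)
    have htr : ∀ k i, tr (T k) i = {a | a ∈ T k ∧ a < δ ∧ blk δ a = i} := by
      intro k i
      ext a
      simp only [tr, Set.mem_setOf_eq, hsdT k]
      
    have htrfin : ∀ k i, (tr (T k) i).Finite := by
      intro k i
      have h1 : tr (T k) i ⊆ y '' {n | y n < ladder δ (i + 1)} := by
        intro a ha
        rw [htr] at ha
        obtain ⟨haT, haδ, hab⟩ := ha
        rw [mem_tail] at haT
        obtain ⟨n, _, rfl⟩ := haT
        refine ⟨n, ?_, rfl⟩
        have h2 := blk_lt hLex haδ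
        rwa [hab] at h2
      exact ((hdiv _ (hLlt (i + 1))).image y).subset h1
    have htrmono : ∀ k i, tr (T k) i ⊆ tr (T 0) i := by
      intro k i a ha
      rw [htr] at ha ⊢
      exact ⟨hTsub0 k ha.1, ha.2⟩
    have hrem : ∀ k a, a ∈ T 0 → a ∉ T k → ∃ n, n < k ∧ y n = a := by
      intro k a ha hnk
      rw [mem_tail] at ha
      obtain ⟨n, _, rfl⟩ := ha
      refine ⟨n, ?_, rfl⟩
      by_contra hc
      push_neg at hc
      exact hnk (mem_tail.2 ⟨n, hc, rfl⟩)
    have hequiv : ∀ k, {i | tr (T k) i ≠ tr (T 0) i}.Finite := by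
      intro k
      have h1 : {i | tr (T k) i ≠ tr (T 0) i} ⊆ (fun a => blk δ a) '' (y '' Set.Iio k) := by
        intro i hi
        obtain ⟨a, haO, haK⟩ := Set.exists_of_ssubset ((htrmono k i).ssubset_of_ne hi)
        rw [htr] at haO
        obtain ⟨haT0, haδ, hab⟩ := haO
        have hanotT : a ∉ T k := by
          intro hmem
          exact haK (by rw [htr]; exact ⟨hmem, haδ, hab⟩)
        obtain ⟨n, hn, rfl⟩ := hrem k _ haT0 hanotT
        exact ⟨y n, ⟨n, hn, rfl⟩, hab⟩
      exact (((Set.finite_Iio k).image y).image _).subset h1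
    have hrepT : ∀ k, rep (T k) = rep (T 0) := fun k => rep_congr (hequiv k)
    set R := rep (T 0) with hR
    have hDDk : ∀ k, DD (T k) = {i | tr (T k) i ≠ R i} := by
      intro k
      rw [DD, hrepT k]
    obtain ⟨N₀, hN₀⟩ := (DD_finite (T 0)).bddAbove
    have hOcc : {i | (tr (T 0) i).Nonempty}.Infinite := by
      by_contra hc
      have hfin : {i | (tr (T 0) i).Nonempty}.Finite := Set.not_infinite.1 hc
      have hsub : T 0 ⊆ ⋃ i ∈ {i | (tr (T 0) i).Nonempty}, tr (T 0) i := by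
        intro a ha
        have haδ : a < δ := by
          rw [mem_tail] at ha
          obtain ⟨n, _, rfl⟩ := ha
          exact hylt n
        have hmem : a ∈ tr (T 0) (blk δ a) := by
          rw [htr]; exact ⟨ha, haδ, rfl⟩
        exact Set.mem_biUnion ⟨a, hmem⟩ hmem
      exact hTinf 0 ((hfin.biUnion fun i _ => htrfin 0 i).subset hsub)
    have hG : ({i | (tr (T 0) i).Nonempty} \ DD (T 0)).Infinite := hOcc.diff (DD_finite (T 0))
    obtain ⟨C, hCsub, hCfin, hCcard⟩ := hG.exists_subset_ncard_eq (N₀ + 2)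
    have hev : ∀ i, ∃ K, ∀ k, K ≤ k → tr (T k) i = ∅ := by
      intro i
      obtain ⟨M, hM⟩ := (hdiv _ (hLlt (i + 1))).bddAbove
      refine ⟨M + 1, fun k hk => ?_⟩
      ext a
      simp only [Set.mem_empty_iff_false, iff_false]
      intro ha
      rw [htr] at ha
      obtain ⟨haT, haδ, hab⟩ := ha
      rw [mem_tail] at haT
      obtain ⟨n, hn, rfl⟩ := haT
      have h1 : y n < ladder δ (i + 1) := by
        have h2 := blk_lt hLex haδ
        rwa [hab] at h2
      have h2 : n ≤ M := hM h1
      omega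
    choose K hK using hev
    set k₁ := hCfin.toFinset.sup K with hk₁
    have hCD : C ⊆ DD (T k₁) := by
      intro i hi
      rw [hDDk]
      have hiG := hCsub hi
      have h1 : tr (T k₁) i = ∅ := hK i k₁ (Finset.le_sup (hCfin.mem_toFinset.2 hi))
      have h2 : R i = tr (T 0) i := by
        have h3 : i ∉ DD (T 0) := hiG.2
        rw [DD] at h3
        simp only [Set.mem_setOf_eq, not_not] at h3
        exact h3.symm
      simp only [Set.mem_setOf_eq]
      rw [h1, h2]
      intro hcon
      exact hiG.1.ne_empty hcon.symm
    have hm2 : N₀ + 2 ≤ mm (T k₁) := by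
      rw [mm, ← hCcard]
      exact Set.ncard_le_ncard hCD (DD_finite _)
    have hDne : {i | mm (T k₁) - 1 ≤ i ∧ i ∈ DD (T k₁)}.Nonempty := by
      by_contra hc
      rw [Set.not_nonempty_iff_eq_empty] at hc
      have hsub : DD (T k₁) ⊆ Set.Iio (mm (T k₁) - 1) := by
        intro i hi
        by_contra h
        rw [Set.mem_Iio, not_lt] at h
        have hrr : i ∈ ({i | mm (T k₁) - 1 ≤ i ∧ i ∈ DD (T k₁)}) := ⟨h, hi⟩
        rw [hc] at hrr
        exact hrr
      have h4 : (DD (T k₁)).ncard ≤ (Set.Iio (mm (T k₁) - 1)).ncard :=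
        Set.ncard_le_ncard hsub (Set.finite_Iio _)
      rw [← Finset.coe_Iio, Set.ncard_coe_finset, Nat.card_Iio, ← mm] at h4
      omega
    have hiimem : ii (T k₁) ∈ {i | mm (T k₁) - 1 ≤ i ∧ i ∈ DD (T k₁)} := by
      rw [ii]
      exact Nat.sInf_mem hDne
    set i₁ := ii (T k₁) with hi₁
    have hi₁ge : mm (T k₁) - 1 ≤ i₁ := hiimem.1
    have hi₁D : i₁ ∈ DD (T k₁) := hiimem.2
    have hi₁good : i₁ ∉ DD (T 0) := by
      intro hbad
      have h1 : i₁ ≤ N₀ := hN₀ hbad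
      omega
    have hRi : R i₁ = tr (T 0) i₁ := by
      rw [DD] at hi₁good
      simp only [Set.mem_setOf_eq, not_not] at hi₁good
      exact hi₁good.symm
    have hne1 : tr (T k₁) i₁ ≠ tr (T 0) i₁ := by
      rw [hDDk] at hi₁D
      rw [← hRi]
      exact hi₁D
    obtain ⟨a₀, ha₀0, ha₀k⟩ := Set.exists_of_ssubset ((htrmono k₁ i₁).ssubset_of_ne hne1)
    have hvalne : ((R i₁ ∩ Set.Iio δ) \ T k₁).Nonempty := by
      refine ⟨a₀, ⟨?_, ?_⟩, ?_⟩
      · rw [hRi]; exact ha₀0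
      · rw [htr] at ha₀0; exact ha₀0.2.1
      · intro hmem
        apply ha₀k
        rw [htr] at ha₀0 ⊢
        exact ⟨hmem, ha₀0.2⟩
    have hFval : F (T k₁) ∈ (R i₁ ∩ Set.Iio δ) \ T k₁ := by
      have hFdef : F (T k₁) = sInf ((R i₁ ∩ Set.Iio δ) \ T k₁) := by
        rw [F, hrepT, ← hi₁, hsdT]
      rw [hFdef]
      exact csInf_mem hvalne
    obtain ⟨⟨hFR, hFδ⟩, hFnotk⟩ := hFval
    rw [hRi, htr] at hFR
    obtain ⟨hFT0, _, _⟩ := hFR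
    rw [mem_tail] at hFT0
    obtain ⟨n, _, hyn⟩ := hFT0
    have hnk : n < k₁ := by
      by_contra hc
      push_neg at hc
      exact hFnotk (mem_tail.2 ⟨n, hc, hyn⟩)
    exact ⟨n, k₁, hnk, T k₁, Set.Subset.rfl, hTc k₁, hTinf k₁, hyn.symm⟩



end Stmt10

/-- for every infinite cardinal `λ` there is a function `F` from the
countably infinite subsets of `λ` to `λ` such that there is no sequence `⟨U_n : n < ω⟩`
of subsets of `λ` with `U_{n+1} ⊆ U_n`, `U_{n+1} ≠ U_n`, and each `U_n` closed under `F`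
(i.e. `F u ∈ U_n` for every countably infinite `u ⊆ U_n`). -/
theorem stmt10 (lam : Cardinal) (hlam : Cardinal.aleph0 ≤ lam) :
    ∃ F : Set Ordinal → Ordinal,
      (∀ u, u ⊆ Set.Iio lam.ord → u.Countable → u.Infinite → F u < lam.ord) ∧
      ¬ ∃ U : ℕ → Set Ordinal,
        (∀ n, U n ⊆ Set.Iio lam.ord) ∧
        (∀ n, U (n + 1) ⊆ U n) ∧ (∀ n, U (n + 1) ≠ U n) ∧
        (∀ n, ∀ u, u ⊆ U n → u.Countable → u.Infinite → F u ∈ U n) := by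
  refine ⟨Stmt10.F, ?_, ?_⟩
  · intro u hu hc hinf
    have h0 : (0 : Ordinal) < lam.ord := by
      calc (0 : Ordinal) < Ordinal.omega0 := Ordinal.omega0_pos
        _ = Cardinal.aleph0.ord := (Cardinal.ord_aleph0).symm
        _ ≤ lam.ord := Cardinal.ord_le_ord.2 hlam
    have hsd : Stmt10.sd u ≤ lam.ord :=
      Stmt10.sd_le hinf.nonempty fun a ha => (Order.add_one_le_iff).2 (hu ha)
    rw [Stmt10.F]
    rcases Set.eq_empty_or_nonempty
        ((Stmt10.rep u (Stmt10.ii u) ∩ Set.Iio (Stmt10.sd u)) \ u) with he | hne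
    · rw [he, Ordinal.sInf_empty]
      exact h0
    · have hmem := csInf_mem hne
      exact lt_of_lt_of_le (Set.mem_Iio.1 hmem.1.2) hsd
  · rintro ⟨U, hU1, hU2, hU3, hU4⟩
    have hex : ∀ n, ∃ a, a ∈ U n ∧ a ∉ U (n + 1) := by
      intro n
      obtain ⟨a, ha1, ha2⟩ := Set.exists_of_ssubset ((hU2 n).ssubset_of_ne (hU3 n))
      exact ⟨a, ha1, ha2⟩
    choose x hx1 hx2 using hex
    have hmono : ∀ j k, j ≤ k → U k ⊆ U j := by
      intro j k h
      induction k, h using Nat.le_induction with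
      | base => exact Set.Subset.rfl
      | succ k hk ih => exact (hU2 k).trans ih
    have haux : ∀ {a b : ℕ}, a < b → x a ≠ x b := by
      intro a b hab heq
      have h1 : x b ∈ U (a + 1) := hmono (a + 1) b hab (hx1 b)
      rw [← heq] at h1
      exact hx2 a h1
    have hxinj : Function.Injective x := by
      intro a b heq
      by_contra hne
      rcases Nat.lt_or_ge a b with h | h
      · exact haux h heq
      · exact haux (lt_of_le_of_ne h (Ne.symm hne)) heq.symm
    obtain ⟨j, k, hjk, s, hsub, hcnt, hinf, hFs⟩ := Stmt10.catch_all x hxinj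
    have hsU : s ⊆ U k := by
      refine hsub.trans ?_
      intro a ha
      rw [Stmt10.mem_tail] at ha
      obtain ⟨n, hn, rfl⟩ := ha
      exact hmono k n hn (hx1 n)
    have h1 : Stmt10.F s ∈ U k := hU4 k s hsU hcnt hinf
    rw [hFs] at h1
    exact hx2 j (hmono (j + 1) k hjk h1)

end
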